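/- Let K be a global field, S a finite set of places of K, and φ an endomorphism of P^1 defined over K with good reduction outside S. Suppose P = P_{−m+1} ↦ P_{−m+2} ↦ … ↦ P_{−1} ↦ P_0 = [0:1] ↦ [0:1] is an orbit for φ (so that P_0 is a fixed point). Then for any integers a, b with 0 < a < b ≤ m−1 and any place 𝔭 ∉ S, one has δ_𝔭(P_{−b}, P_{−a}) = δ_𝔭(P_{−b}, P_0) ≤ δ_𝔭(P_{−a}, P_0). -/

import Mathlib

/-!
Common definitions used to formalize the statements of
"Preperiodic points for rational functions defined over a global field
in terms of good reduction" (arXiv:1403.2293).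

* A (normalized, non-archimedean) place of a field `K` is modeled as a surjective
  discrete valuation `v : K → ℤ` (with the junk convention `v 0 = 0`).
* `P1 K` is the projective line over `K`; a point `[x : y]` is `P1.mk x y _`.
* An endomorphism of `P1` defined over `K` is a map `φ : P1 K → P1 K` admitting a
  lift by a pair of binary forms of a common degree `d`, given through their
  coefficient vectors, with nonvanishing resultant (the resultant is defined as
  the determinant of the Sylvester matrix).
* `φ` has good reduction at a place `pl` if it admits a lift whose coefficients
  are `pl`-integral and whose resultant is a `pl`-unit.
* `logDist` is the `𝔭`-adic logarithmic distance `δ_𝔭`; two points of `P1 K` have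
  the same reduction modulo `pl` if and only if `0 < logDist pl P Q`.
* The multiplier of a fixed point `[x:y]` of a map lifted by the forms `(a, b)` of
  degree `d` is computed by the trace formula
  `λ = (∂F/∂x (x,y) + ∂G/∂y (x,y) - d⬝c)/c`, where `c` is the scalar with
  `F(x,y) = c⬝x` and `G(x,y) = c⬝y`.
-/

namespace ArxivPreper

/-- A normalized non-archimedean place of `K`: a surjective discrete valuation
`v : K → ℤ`, with the junk convention `v 0 = 0`. -/
structure Place (K : Type*) [Field K] where
  v : K → ℤ
  v_zero : v 0 = 0
  v_mul : ∀ x y : K, x ≠ 0 → y ≠ 0 → v (x * y) = v x + v y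
  v_add : ∀ x y : K, x ≠ 0 → y ≠ 0 → x + y ≠ 0 → min (v x) (v y) ≤ v (x + y)
  v_surj : ∀ n : ℤ, ∃ x : K, x ≠ 0 ∧ v x = n

namespace Place

variable {K : Type*} [Field K] (pl : Place K)

lemma v_one : pl.v 1 = 0 := by
  have h := pl.v_mul 1 1 one_ne_zero one_ne_zero
  rw [one_mul] at h
  omega

lemma v_neg_one : pl.v (-1 : K) = 0 := by
  have h := pl.v_mul (-1 : K) (-1) (by norm_num) (by norm_num)
  rw [show ((-1 : K) * (-1)) = 1 by ring, pl.v_one] at h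
  omega

lemma v_neg (x : K) : pl.v (-x) = pl.v x := by
  by_cases h : x = 0
  · simp [h]
  · have h1 := pl.v_mul (-1) x (by norm_num) h
    rw [show (-1 : K) * x = -x by ring, pl.v_neg_one] at h1
    omega

lemma v_mul_nonneg {x y : K} (hx : 0 ≤ pl.v x) (hy : 0 ≤ pl.v y) : 0 ≤ pl.v (x * y) := by
  by_cases h1 : x = 0
  · simp [h1, pl.v_zero]
  by_cases h2 : y = 0
  · simp [h2, pl.v_zero]
  rw [pl.v_mul x y h1 h2]
  omega

lemma v_add_nonneg {x y : K} (hx : 0 ≤ pl.v x) (hy : 0 ≤ pl.v y) : 0 ≤ pl.v (x + y) := by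
  by_cases h1 : x = 0
  · simpa [h1] using hy
  by_cases h2 : y = 0
  · simpa [h2] using hx
  by_cases h3 : x + y = 0
  · rw [h3, pl.v_zero]
  exact le_trans (le_min hx hy) (pl.v_add x y h1 h2 h3)

lemma hred_add {a b : K} (ha : a = 0 ∨ 0 < pl.v a) (hb : b = 0 ∨ 0 < pl.v b) :
    a + b = 0 ∨ 0 < pl.v (a + b) := by
  rcases ha with ha | ha
  · subst ha; simpa using hb
  rcases hb with hb | hb
  · subst hb; simpa using Or.inr ha
  by_cases h3 : a + b = 0
  · exact Or.inl h3
  · right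
    have hA : a ≠ 0 := by
      intro h; rw [h, pl.v_zero] at ha; exact absurd ha (lt_irrefl 0)
    have hB : b ≠ 0 := by
      intro h; rw [h, pl.v_zero] at hb; exact absurd hb (lt_irrefl 0)
    exact lt_of_lt_of_le (lt_min ha hb) (pl.v_add a b hA hB h3)

lemma hred_mul {a b : K} (ha : 0 ≤ pl.v a) (hb : b = 0 ∨ 0 < pl.v b) :
    a * b = 0 ∨ 0 < pl.v (a * b) := by
  rcases hb with hb | hb
  · exact Or.inl (by rw [hb, mul_zero])
  by_cases h1 : a = 0
  · exact Or.inl (by rw [h1, zero_mul])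
  by_cases h2 : b = 0
  · exact Or.inl (by rw [h2, mul_zero])
  · right
    rw [pl.v_mul a b h1 h2]
    omega

end Place

/-- `K` is a global field: a number field, or a finite extension of `𝔽_p(t)`. -/
def IsGlobalField (K : Type*) [Field K] : Prop :=
  NumberField K ∨
    ∃ (p : ℕ) (hp : Fact p.Prime),
      letI := hp
      ∃ A : Algebra (RatFunc (ZMod p)) K,
        letI := A
        FiniteDimensional (RatFunc (ZMod p)) K

variable {K : Type*} [Field K]

/-- The projective line over `K`. -/
abbrev P1 (K : Type*) [Field K] := Projectivization K (Fin 2 → K)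

/-- The point `[x : y]` of the projective line. -/
def P1.mk (x y : K) (h : ¬(x = 0 ∧ y = 0)) : P1 K :=
  Projectivization.mk K ![x, y]
    (fun h0 => h ⟨by simpa using congrFun h0 0, by simpa using congrFun h0 1⟩)

/-- The point `[0 : 1]`. -/
def P1zero : P1 K := P1.mk 0 1 (fun h => one_ne_zero h.2)

/-- Value at `(x, y)` of the binary form of degree `d` with coefficient
vector `a` (the coefficient of `x^i y^(d-i)` is `a i`). -/
def formEval (d : ℕ) (a : Fin (d + 1) → K) (x y : K) : K :=
  ∑ i : Fin (d + 1), a i * x ^ (i : ℕ) * y ^ (d - (i : ℕ))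

/-- The Sylvester matrix of two binary forms of degree `d`, given by their
coefficient vectors. -/
def sylvester (d : ℕ) (a b : Fin (d + 1) → K) : Matrix (Fin (d + d)) (Fin (d + d)) K :=
  Matrix.of fun i j =>
    if hi : (i : ℕ) < d then
      if h : (i : ℕ) ≤ (j : ℕ) ∧ (j : ℕ) ≤ (i : ℕ) + d then a ⟨(j : ℕ) - (i : ℕ), by omega⟩
      else 0
    else
      if h : (i : ℕ) - d ≤ (j : ℕ) ∧ (j : ℕ) ≤ (i : ℕ) then
        b ⟨(j : ℕ) - ((i : ℕ) - d), by omega⟩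
      else 0

/-- The resultant of two binary forms of degree `d`: the determinant of their
Sylvester matrix. -/
def resultant (d : ℕ) (a b : Fin (d + 1) → K) : K := (sylvester d a b).det

/-- `(a, b)` is a pair of coefficient vectors of binary forms `F`, `G` of common degree `d`,
with nonzero resultant, such that `φ([x:y]) = [F(x,y) : G(x,y)]` on `P1 K`.  This witnesses
that `φ` is an endomorphism of the projective line defined over `K` (of degree `d`). -/
def IsLift (φ : P1 K → P1 K) (d : ℕ) (a b : Fin (d + 1) → K) : Prop :=
  resultant d a b ≠ 0 ∧
    ∀ (x y : K) (h : ¬(x = 0 ∧ y = 0)),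
      ∃ h' : ¬(formEval d a x y = 0 ∧ formEval d b x y = 0),
        φ (P1.mk x y h) = P1.mk (formEval d a x y) (formEval d b x y) h'

/-- `φ` is an endomorphism of `P1` defined over `K`. -/
def IsEndo (φ : P1 K → P1 K) : Prop := ∃ d a b, IsLift φ d a b

/-- `φ` has good reduction at the place `pl`: it can be written as `[F : G]` with `F`, `G`
binary forms of a common degree whose coefficients are `pl`-integral and whose resultant
is a `pl`-unit. -/
def GoodReduction (pl : Place K) (φ : P1 K → P1 K) : Prop :=
  ∃ (d : ℕ) (a b : Fin (d + 1) → K),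
    IsLift φ d a b ∧ (∀ i, 0 ≤ pl.v (a i)) ∧ (∀ i, 0 ≤ pl.v (b i)) ∧
      pl.v (resultant d a b) = 0

open Classical in
/-- The valuation of a place extended by `v 0 = ⊤`. -/
noncomputable def extv (pl : Place K) (x : K) : WithTop ℤ :=
  if x = 0 then ⊤ else (pl.v x : WithTop ℤ)

open Classical in
/-- `min (v x) (v y)` for a nonzero vector `(x, y)`, ignoring vanishing coordinates. -/
noncomputable def vminVec (pl : Place K) (w : Fin 2 → K) : ℤ :=
  if w 0 = 0 then pl.v (w 1)
  else if w 1 = 0 then pl.v (w 0)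
  else min (pl.v (w 0)) (pl.v (w 1))

/-- The `𝔭`-adic logarithmic distance
`δ_𝔭(P,Q) = v(x₁y₂ - x₂y₁) - min (v x₁) (v y₁) - min (v x₂) (v y₂)`
(computed on fixed representatives; it is independent of the choice of homogeneous
coordinates).  Note `δ_𝔭(P,Q) = ⊤` iff `P = Q`, and two points have the same reduction
modulo `pl` iff `0 < δ_𝔭(P,Q)`. -/
noncomputable def logDist (pl : Place K) (P Q : P1 K) : WithTop ℤ :=
  extv pl (P.rep 0 * Q.rep 1 - Q.rep 0 * P.rep 1) +
    ((-(vminVec pl P.rep) - vminVec pl Q.rep : ℤ) : WithTop ℤ)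

/-- The forward orbit `{φ^n(P) : n ∈ ℕ}` of `P` under `φ`. -/
def orbit (φ : P1 K → P1 K) (P : P1 K) : Set (P1 K) := Set.range fun n : ℕ => φ^[n] P

/-- `P` is preperiodic for `φ`: its forward orbit is finite. -/
def Preperiodic (φ : P1 K → P1 K) (P : P1 K) : Prop := (orbit φ P).Finite

/-- `P` is periodic for `φ`. -/
def PeriodicPt (φ : P1 K → P1 K) (P : P1 K) : Prop := ∃ n : ℕ, 0 < n ∧ φ^[n] P = P

/-- `x` is an `S`-unit of `K`. -/
def IsSUnit (S : Finset (Place K)) (x : K) : Prop :=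
  x ≠ 0 ∧ ∀ pl : Place K, pl ∉ S → pl.v x = 0

/-- The ring of `S`-integers of `K`. -/
def SIntegers (S : Finset (Place K)) : Subring K where
  carrier := {x : K | ∀ pl : Place K, pl ∉ S → 0 ≤ pl.v x}
  zero_mem' := fun pl _ => le_of_eq pl.v_zero.symm
  one_mem' := fun pl _ => le_of_eq pl.v_one.symm
  add_mem' := fun hx hy pl hpl => pl.v_add_nonneg (hx pl hpl) (hy pl hpl)
  mul_mem' := fun hx hy pl hpl => pl.v_mul_nonneg (hx pl hpl) (hy pl hpl)
  neg_mem' := fun {x} hx pl hpl => show 0 ≤ pl.v (-x) by rw [pl.v_neg]; exact hx pl hpl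

/-- The local ring `R_𝔭 = {x : v_𝔭(x) ≥ 0}` at the place `pl`. -/
def integersAt (pl : Place K) : Subring K where
  carrier := {x : K | 0 ≤ pl.v x}
  zero_mem' := le_of_eq pl.v_zero.symm
  one_mem' := le_of_eq pl.v_one.symm
  add_mem' := fun hx hy => pl.v_add_nonneg hx hy
  mul_mem' := fun hx hy => pl.v_mul_nonneg hx hy
  neg_mem' := fun {x} hx => show 0 ≤ pl.v (-x) by rw [pl.v_neg]; exact hx

/-- The maximal ideal `{x : v_𝔭(x) > 0}` of the local ring at `pl`. -/
def maxIdealAt (pl : Place K) : Ideal ↥(integersAt pl) where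
  carrier := {x : ↥(integersAt pl) | (x : K) = 0 ∨ 0 < pl.v (x : K)}
  zero_mem' := Or.inl rfl
  add_mem' := fun {a b} ha hb => by
    have h := pl.hred_add (a := (a : K)) (b := (b : K)) ha hb
    show ((a + b : ↥(integersAt pl)) : K) = 0 ∨ 0 < pl.v ((a + b : ↥(integersAt pl)) : K)
    push_cast
    exact h
  smul_mem' := fun c {x} hx => by
    have h := pl.hred_mul (a := (c : K)) (b := (x : K)) c.2 hx
    show ((c • x : ↥(integersAt pl)) : K) = 0 ∨ 0 < pl.v ((c • x : ↥(integersAt pl)) : K)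
    rw [smul_eq_mul]
    push_cast
    exact h

/-- The residue field `k(𝔭)` at the place `pl`. -/
def Residue (pl : Place K) : Type _ := ↥(integersAt pl) ⧸ maxIdealAt pl

/-- Value at `(x,y)` of `∂F/∂x` for the binary form `F` of degree `d` with coefficient
vector `a`. -/
def formEvalDx (d : ℕ) (a : Fin (d + 1) → K) (x y : K) : K :=
  ∑ i : Fin (d + 1), ((i : ℕ) : K) * a i * x ^ ((i : ℕ) - 1) * y ^ (d - (i : ℕ))

/-- Value at `(x,y)` of `∂G/∂y` for the binary form `G` of degree `d` with coefficient
vector `b`. -/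
def formEvalDy (d : ℕ) (b : Fin (d + 1) → K) (x y : K) : K :=
  ∑ i : Fin (d + 1), ((d - (i : ℕ) : ℕ) : K) * b i * x ^ (i : ℕ) * y ^ (d - (i : ℕ) - 1)

/-- The multiplier `λ_P` at a fixed point `P = [x:y]` of the map lifted by the pair of
degree-`d` binary forms `(a, b)`, where `c` is the scalar with `F(x,y) = c⬝x` and
`G(x,y) = c⬝y`: by the trace formula, `λ = (F_x(x,y) + G_y(x,y) - d⬝c)/c`. -/
noncomputable def multiplier (d : ℕ) (a b : Fin (d + 1) → K) (x y c : K) : K :=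
  (formEvalDx d a x y + formEvalDy d b x y - (d : K) * c) / c

section Aux

open Finset

variable {K : Type*} [Field K] (pl : Place K)

namespace Place

lemma v_pow_nonneg {x : K} (hx : 0 ≤ pl.v x) (n : ℕ) : 0 ≤ pl.v (x ^ n) := by
  induction n with
  | zero => simpa using le_of_eq pl.v_one.symm
  | succ n ih => rw [pow_succ]; exact pl.v_mul_nonneg ih hx

lemma v_sum_nonneg {ι : Type*} (s : Finset ι) (f : ι → K) (h : ∀ i ∈ s, 0 ≤ pl.v (f i)) :
    0 ≤ pl.v (∑ i ∈ s, f i) :=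
  Finset.sum_induction f (fun t => 0 ≤ pl.v t) (fun _ _ ha hb => pl.v_add_nonneg ha hb)
    (le_of_eq pl.v_zero.symm) h

lemma v_prod_nonneg {ι : Type*} (s : Finset ι) (f : ι → K) (h : ∀ i ∈ s, 0 ≤ pl.v (f i)) :
    0 ≤ pl.v (∏ i ∈ s, f i) :=
  Finset.prod_induction f (fun t => 0 ≤ pl.v t) (fun _ _ ha hb => pl.v_mul_nonneg ha hb)
    (le_of_eq pl.v_one.symm) h

lemma hred_sum {ι : Type*} (s : Finset ι) (f : ι → K)
    (h : ∀ i ∈ s, f i = 0 ∨ 0 < pl.v (f i)) :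
    (∑ i ∈ s, f i) = 0 ∨ 0 < pl.v (∑ i ∈ s, f i) :=
  Finset.sum_induction f (fun t => t = 0 ∨ 0 < pl.v t) (fun _ _ ha hb => pl.hred_add ha hb)
    (Or.inl rfl) h

lemma v_pow_eq {x : K} (hx : x ≠ 0) (n : ℕ) : pl.v (x ^ n) = n * pl.v x := by
  induction n with
  | zero => simpa using pl.v_one
  | succ n ih =>
      rw [pow_succ, pl.v_mul _ _ (pow_ne_zero n hx) hx, ih]
      push_cast; ring

end Place

lemma v_det_nonneg {n : ℕ} (A : Matrix (Fin n) (Fin n) K) (h : ∀ i j, 0 ≤ pl.v (A i j)) :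
    0 ≤ pl.v A.det := by
  rw [Matrix.det_apply]
  refine pl.v_sum_nonneg _ _ (fun σ _ => ?_)
  have hp : 0 ≤ pl.v (∏ i, A (σ i) i) := pl.v_prod_nonneg _ _ (fun i _ => h _ _)
  rcases Int.units_eq_one_or (Equiv.Perm.sign σ) with hs | hs <;>
    simp [hs, Units.smul_def, pl.v_neg, hp]

lemma extv_eq_coe {x : K} (hx : x ≠ 0) : extv pl x = (pl.v x : WithTop ℤ) := if_neg hx

lemma extv_zero : extv pl (0 : K) = ⊤ := if_pos rfl

lemma extv_neg (x : K) : extv pl (-x) = extv pl x := by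
  by_cases hx : x = 0
  · simp [hx]
  · rw [extv_eq_coe pl (neg_ne_zero.2 hx), extv_eq_coe pl hx, pl.v_neg]

lemma extv_mul (c x : K) (hc : c ≠ 0) :
    extv pl (c * x) = (pl.v c : WithTop ℤ) + extv pl x := by
  by_cases hx : x = 0
  · simp [hx, extv_zero]
  · rw [extv_eq_coe pl (mul_ne_zero hc hx), extv_eq_coe pl hx, pl.v_mul c x hc hx]
    push_cast; rfl

open Classical in
lemma vminVec_pair (x y : K) :
    vminVec pl ![x, y] =
      if x = 0 then pl.v y else if y = 0 then pl.v x else min (pl.v x) (pl.v y) := by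
  simp [vminVec]

lemma vminVec_le_left {x : K} (y : K) (hx : x ≠ 0) : vminVec pl ![x, y] ≤ pl.v x := by
  rw [vminVec_pair]
  split_ifs <;> simp_all

lemma vminVec_le_right (x : K) {y : K} (hy : y ≠ 0) : vminVec pl ![x, y] ≤ pl.v y := by
  rw [vminVec_pair]
  split_ifs <;> simp_all

lemma coord_nonneg_left {x y : K} (h : vminVec pl ![x, y] = 0) : 0 ≤ pl.v x := by
  by_cases hx : x = 0
  · simp [hx, pl.v_zero]
  · have := vminVec_le_left pl y hx
    omega

lemma coord_nonneg_right {x y : K} (h : vminVec pl ![x, y] = 0) : 0 ≤ pl.v y := by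
  by_cases hy : y = 0
  · simp [hy, pl.v_zero]
  · have := vminVec_le_right pl x hy
    omega

lemma vminVec_eq_zero {x y : K} (hx : 0 ≤ pl.v x) (hy : 0 ≤ pl.v y)
    (h : (x ≠ 0 ∧ pl.v x = 0) ∨ (y ≠ 0 ∧ pl.v y = 0)) : vminVec pl ![x, y] = 0 := by
  rw [vminVec_pair]
  split_ifs with h1 h2
  · rcases h with ⟨hx0, _⟩ | ⟨_, hvy⟩
    · exact absurd h1 hx0
    · exact hvy
  · rcases h with ⟨_, hvx⟩ | ⟨hy0, _⟩
    · exact hvx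
    · exact absurd h2 hy0
  · rcases h with ⟨_, hvx⟩ | ⟨_, hvy⟩ <;> omega

open Classical in
lemma vminVec_smul (c : K) (hc : c ≠ 0) (x y : K) (hxy : ¬(x = 0 ∧ y = 0)) :
    vminVec pl ![c * x, c * y] = pl.v c + vminVec pl ![x, y] := by
  by_cases hx : x = 0
  · have hy : y ≠ 0 := fun h => hxy ⟨hx, h⟩
    rw [hx, mul_zero, vminVec_pair, vminVec_pair, if_pos rfl, if_pos rfl,
      pl.v_mul c y hc hy]
  · by_cases hy : y = 0
    · rw [hy, mul_zero, vminVec_pair, vminVec_pair, if_neg (mul_ne_zero hc hx), if_neg hx,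
        if_pos rfl, if_pos rfl, pl.v_mul c x hc hx]
    · rw [vminVec_pair, vminVec_pair, if_neg (mul_ne_zero hc hx), if_neg (mul_ne_zero hc hy),
        if_neg hx, if_neg hy, pl.v_mul c x hc hx, pl.v_mul c y hc hy]
      omega

lemma P1.rep_pair (A : P1 K) : ![A.rep 0, A.rep 1] = A.rep := by
  funext i
  fin_cases i <;> rfl

lemma P1.rep_ne (A : P1 K) : ¬(A.rep 0 = 0 ∧ A.rep 1 = 0) := by
  rintro ⟨h0, h1⟩
  refine A.rep_nonzero (funext fun i => ?_)
  fin_cases i <;> assumption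

lemma P1.mk_rep (A : P1 K) (h : ¬(A.rep 0 = 0 ∧ A.rep 1 = 0)) :
    P1.mk (A.rep 0) (A.rep 1) h = A := by
  unfold P1.mk
  conv_rhs => rw [← Projectivization.mk_rep A]
  rw [Projectivization.mk_eq_mk_iff]
  exact ⟨1, by simp [P1.rep_pair]⟩

lemma P1.mk_smul (c : K) (hc : c ≠ 0) (x y : K) (h : ¬(x = 0 ∧ y = 0))
    (h' : ¬(c * x = 0 ∧ c * y = 0)) :
    P1.mk (c * x) (c * y) h' = P1.mk x y h := by
  unfold P1.mk
  rw [Projectivization.mk_eq_mk_iff]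
  refine ⟨Units.mk0 c hc, ?_⟩
  funext i
  fin_cases i <;> simp [Units.smul_def]

lemma logDist_def' (A B : P1 K) :
    logDist pl A B = extv pl (A.rep 0 * B.rep 1 - B.rep 0 * A.rep 1) +
      ((-(vminVec pl ![A.rep 0, A.rep 1]) - vminVec pl ![B.rep 0, B.rep 1] : ℤ) : WithTop ℤ) := by
  unfold logDist
  rw [P1.rep_pair, P1.rep_pair]

lemma wt_shift (u v : ℤ) (w : WithTop ℤ) (z : ℤ) (hz : u + v = z) :
    (u : WithTop ℤ) + w + (v : WithTop ℤ) = w + (z : WithTop ℤ) := by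
  induction w using WithTop.recTopCoe with
  | top => simp
  | coe t =>
      rw [← WithTop.coe_add, ← WithTop.coe_add, ← WithTop.coe_add, WithTop.coe_inj]
      omega

lemma logDist_mk_mk (x1 y1 x2 y2 : K) (h1 : ¬(x1 = 0 ∧ y1 = 0)) (h2 : ¬(x2 = 0 ∧ y2 = 0)) :
    logDist pl (P1.mk x1 y1 h1) (P1.mk x2 y2 h2) =
      extv pl (x1 * y2 - x2 * y1) +
        ((-(vminVec pl ![x1, y1]) - vminVec pl ![x2, y2] : ℤ) : WithTop ℤ) := by
  set A := P1.mk x1 y1 h1 with hA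
  set B := P1.mk x2 y2 h2 with hB
  have hv1 : (![x1, y1] : Fin 2 → K) ≠ 0 := fun h0 =>
    h1 ⟨by simpa using congrFun h0 0, by simpa using congrFun h0 1⟩
  have hv2 : (![x2, y2] : Fin 2 → K) ≠ 0 := fun h0 =>
    h2 ⟨by simpa using congrFun h0 0, by simpa using congrFun h0 1⟩
  obtain ⟨c1, hc1⟩ : ∃ c : Kˣ, c • ![x1, y1] = A.rep := by
    rw [← Projectivization.mk_eq_mk_iff K _ _ A.rep_nonzero hv1, Projectivization.mk_rep, hA]
    rfl
  obtain ⟨c2, hc2⟩ : ∃ c : Kˣ, c • ![x2, y2] = B.rep := by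
    rw [← Projectivization.mk_eq_mk_iff K _ _ B.rep_nonzero hv2, Projectivization.mk_rep, hB]
    rfl
  have e10 : A.rep 0 = (c1 : K) * x1 := by rw [← hc1]; simp [Units.smul_def]
  have e11 : A.rep 1 = (c1 : K) * y1 := by rw [← hc1]; simp [Units.smul_def]
  have e20 : B.rep 0 = (c2 : K) * x2 := by rw [← hc2]; simp [Units.smul_def]
  have e21 : B.rep 1 = (c2 : K) * y2 := by rw [← hc2]; simp [Units.smul_def]
  rw [logDist_def' pl A B, e10, e11, e20, e21]
  have hcross : (c1 : K) * x1 * ((c2 : K) * y2) - (c2 : K) * x2 * ((c1 : K) * y1) =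
      ((c1 : K) * (c2 : K)) * (x1 * y2 - x2 * y1) := by ring
  rw [hcross, extv_mul pl _ _ (mul_ne_zero c1.ne_zero c2.ne_zero),
    pl.v_mul _ _ c1.ne_zero c2.ne_zero,
    vminVec_smul pl _ c1.ne_zero _ _ h1, vminVec_smul pl _ c2.ne_zero _ _ h2]
  exact wt_shift _ _ _ _ (by ring)

lemma logDist_comm (A B : P1 K) : logDist pl A B = logDist pl B A := by
  unfold logDist
  rw [show B.rep 0 * A.rep 1 - A.rep 0 * B.rep 1 =
    -(A.rep 0 * B.rep 1 - B.rep 0 * A.rep 1) from by ring, extv_neg]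
  congr 1
  rw [WithTop.coe_inj]
  ring

lemma logDist_top_of_cross_zero (A B : P1 K)
    (h : A.rep 0 * B.rep 1 - B.rep 0 * A.rep 1 = 0) : logDist pl A B = ⊤ := by
  unfold logDist
  rw [h, extv_zero, top_add]

lemma mk_eq_of_cross (x1 y1 x2 y2 : K) (h1 : ¬(x1 = 0 ∧ y1 = 0)) (h2 : ¬(x2 = 0 ∧ y2 = 0))
    (h : x1 * y2 - x2 * y1 = 0) : P1.mk x1 y1 h1 = P1.mk x2 y2 h2 := by
  have key : ∃ c : K, c ≠ 0 ∧ c * x2 = x1 ∧ c * y2 = y1 := by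
    by_cases hx2 : x2 = 0
    · have hy2 : y2 ≠ 0 := fun hh => h2 ⟨hx2, hh⟩
      have hx1 : x1 = 0 := by
        have : x1 * y2 = 0 := by rw [hx2] at h; linear_combination h
        rcases mul_eq_zero.1 this with h' | h'
        · exact h'
        · exact absurd h' hy2
      have hy1 : y1 ≠ 0 := fun hh => h1 ⟨hx1, hh⟩
      exact ⟨y1 / y2, div_ne_zero hy1 hy2, by rw [hx2, hx1, mul_zero], by field_simp⟩
    · have hx1 : x1 ≠ 0 := by
        intro hx1
        have : x2 * y1 = 0 := by rw [hx1] at h; linear_combination -h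
        rcases mul_eq_zero.1 this with h' | h'
        · exact absurd h' hx2
        · exact h1 ⟨hx1, h'⟩
      refine ⟨x1 / x2, div_ne_zero hx1 hx2, by field_simp, ?_⟩
      field_simp
      linear_combination h
  obtain ⟨c, hc, hcx, hcy⟩ := key
  subst hcx
  subst hcy
  exact P1.mk_smul c hc x2 y2 h2 h1

lemma eq_of_cross_zero (A B : P1 K)
    (h : A.rep 0 * B.rep 1 - B.rep 0 * A.rep 1 = 0) : A = B := by
  rw [← P1.mk_rep A (P1.rep_ne A), ← P1.mk_rep B (P1.rep_ne B)]
  exact mk_eq_of_cross _ _ _ _ _ _ h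

lemma vmin_attained (x y : K) (h : ¬(x = 0 ∧ y = 0)) :
    ∃ t : K, (t = x ∨ t = y) ∧ t ≠ 0 ∧ pl.v t = vminVec pl ![x, y] := by
  rw [vminVec_pair]
  by_cases hx : x = 0
  · have hy : y ≠ 0 := fun hh => h ⟨hx, hh⟩
    exact ⟨y, Or.inr rfl, hy, by rw [if_pos hx]⟩
  · by_cases hy : y = 0
    · exact ⟨x, Or.inl rfl, hx, by rw [if_neg hx, if_pos hy]⟩
    · rcases le_total (pl.v x) (pl.v y) with hle | hle
      · exact ⟨x, Or.inl rfl, hx, by rw [if_neg hx, if_neg hy]; omega⟩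
      · exact ⟨y, Or.inr rfl, hy, by rw [if_neg hx, if_neg hy]; omega⟩

lemma dlog_ultra (x1 y1 x2 y2 x3 y3 : K)
    (hB : ¬(x2 = 0 ∧ y2 = 0))
    (h12 : x1 * y2 - x2 * y1 ≠ 0) (h23 : x2 * y3 - x3 * y2 ≠ 0)
    (h13 : x1 * y3 - x3 * y1 ≠ 0) :
    min (extv pl (x1 * y2 - x2 * y1) +
        ((-(vminVec pl ![x1, y1]) - vminVec pl ![x2, y2] : ℤ) : WithTop ℤ))
      (extv pl (x2 * y3 - x3 * y2) +
        ((-(vminVec pl ![x2, y2]) - vminVec pl ![x3, y3] : ℤ) : WithTop ℤ)) ≤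
    extv pl (x1 * y3 - x3 * y1) +
        ((-(vminVec pl ![x1, y1]) - vminVec pl ![x3, y3] : ℤ) : WithTop ℤ) := by
  set m1 := vminVec pl ![x1, y1] with hm1
  set m2 := vminVec pl ![x2, y2] with hm2
  set m3 := vminVec pl ![x3, y3] with hm3
  rw [extv_eq_coe pl h12, extv_eq_coe pl h23, extv_eq_coe pl h13,
    ← WithTop.coe_add, ← WithTop.coe_add, ← WithTop.coe_add, ← WithTop.coe_min,
    WithTop.coe_le_coe]
  obtain ⟨t, ht, ht0, htv⟩ := vmin_attained pl x2 y2 hB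
  obtain ⟨u, w, hid, hu, hw⟩ : ∃ u w : K,
      t * (x1 * y3 - x3 * y1) = u * (x2 * y3 - x3 * y2) + w * (x1 * y2 - x2 * y1) ∧
        (u = x1 ∨ u = y1) ∧ (w = x3 ∨ w = y3) := by
    rcases ht with rfl | rfl
    · exact ⟨x1, x3, by ring, Or.inl rfl, Or.inl rfl⟩
    · exact ⟨y1, y3, by ring, Or.inr rfl, Or.inr rfl⟩
  have hu' : u ≠ 0 → m1 ≤ pl.v u := by
    intro h0
    rcases hu with rfl | rfl
    · exact vminVec_le_left pl _ h0
    · exact vminVec_le_right pl _ h0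
  have hw' : w ≠ 0 → m3 ≤ pl.v w := by
    intro h0
    rcases hw with rfl | rfl
    · exact vminVec_le_left pl _ h0
    · exact vminVec_le_right pl _ h0
  have hvt : pl.v (t * (x1 * y3 - x3 * y1)) = m2 + pl.v (x1 * y3 - x3 * y1) := by
    rw [pl.v_mul _ _ ht0 h13, htv]
  have key : min (m1 + pl.v (x2 * y3 - x3 * y2)) (m3 + pl.v (x1 * y2 - x2 * y1)) ≤
      m2 + pl.v (x1 * y3 - x3 * y1) := by
    rw [← hvt, hid]
    by_cases hu0 : u = 0
    · have hw0 : w ≠ 0 := by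
        intro hw0
        rw [hu0, hw0, zero_mul, zero_mul, add_zero] at hid
        exact mul_ne_zero ht0 h13 hid
      rw [hu0, zero_mul, zero_add, pl.v_mul _ _ hw0 h12]
      have := hw' hw0
      refine le_trans (min_le_right _ _) ?_
      omega
    · by_cases hw0 : w = 0
      · rw [hw0, zero_mul, add_zero, pl.v_mul _ _ hu0 h23]
        have := hu' hu0
        refine le_trans (min_le_left _ _) ?_
        omega
      · have hs1 : u * (x2 * y3 - x3 * y2) ≠ 0 := mul_ne_zero hu0 h23
        have hs3 : w * (x1 * y2 - x2 * y1) ≠ 0 := mul_ne_zero hw0 h12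
        have hss : u * (x2 * y3 - x3 * y2) + w * (x1 * y2 - x2 * y1) ≠ 0 := by
          rw [← hid]
          exact mul_ne_zero ht0 h13
        refine le_trans ?_ (pl.v_add _ _ hs1 hs3 hss)
        rw [pl.v_mul _ _ hu0 h23, pl.v_mul _ _ hw0 h12]
        have h1 := hu' hu0
        have h3 := hw' hw0
        exact le_min (le_trans (min_le_left _ _) (by omega))
          (le_trans (min_le_right _ _) (by omega))
  rcases le_or_gt (m1 + pl.v (x2 * y3 - x3 * y2)) (m3 + pl.v (x1 * y2 - x2 * y1)) with hc | hc
  · rw [min_eq_left hc] at key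
    exact min_le_iff.mpr (Or.inr (by omega))
  · rw [min_eq_right (le_of_lt hc)] at key
    exact min_le_iff.mpr (Or.inl (by omega))

/-- The ultrametric inequality for the logarithmic distance. -/
lemma logDist_ultra (A B C : P1 K) :
    min (logDist pl A B) (logDist pl B C) ≤ logDist pl A C := by
  by_cases h13 : A.rep 0 * C.rep 1 - C.rep 0 * A.rep 1 = 0
  · rw [logDist_top_of_cross_zero pl A C h13]
    exact le_top
  by_cases h12 : A.rep 0 * B.rep 1 - B.rep 0 * A.rep 1 = 0
  · rw [eq_of_cross_zero A B h12]
    exact min_le_right _ _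
  by_cases h23 : B.rep 0 * C.rep 1 - C.rep 0 * B.rep 1 = 0
  · rw [← eq_of_cross_zero B C h23]
    exact min_le_left _ _
  rw [logDist_def' pl A B, logDist_def' pl B C, logDist_def' pl A C]
  exact dlog_ultra pl _ _ _ _ _ _ (P1.rep_ne B) h12 h23 h13

lemma cross_dvd_le {R : Type*} [CommRing R] (d i j : ℕ) (hj : j ≤ d) (hij : i ≤ j)
    (x1 y1 x2 y2 : R) :
    (x1 * y2 - x2 * y1) ∣
      (x1 ^ i * y1 ^ (d - i) * (x2 ^ j * y2 ^ (d - j)) -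
        x2 ^ i * y2 ^ (d - i) * (x1 ^ j * y1 ^ (d - j))) := by
  obtain ⟨n, rfl⟩ := Nat.exists_eq_add_of_le hij
  have e1 : d - i = (d - (i + n)) + n := by omega
  have key : x1 ^ i * y1 ^ (d - i) * (x2 ^ (i + n) * y2 ^ (d - (i + n))) -
      x2 ^ i * y2 ^ (d - i) * (x1 ^ (i + n) * y1 ^ (d - (i + n))) =
      (x1 ^ i * y1 ^ (d - (i + n)) * (x2 ^ i * y2 ^ (d - (i + n)))) *
        ((x2 * y1) ^ n - (x1 * y2) ^ n) := by
    rw [e1]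
    ring
  rw [key]
  have h2 : (x1 * y2 - x2 * y1) ∣ ((x2 * y1) ^ n - (x1 * y2) ^ n) := by
    have := sub_dvd_pow_sub_pow (x1 * y2) (x2 * y1) n
    rw [show (x2 * y1) ^ n - (x1 * y2) ^ n = -((x1 * y2) ^ n - (x2 * y1) ^ n) from by ring]
    exact dvd_neg.mpr this
  exact Dvd.dvd.mul_left h2 _

lemma cross_dvd_aux {R : Type*} [CommRing R] (d i j : ℕ) (hi : i ≤ d) (hj : j ≤ d)
    (x1 y1 x2 y2 : R) :
    (x1 * y2 - x2 * y1) ∣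
      (x1 ^ i * y1 ^ (d - i) * (x2 ^ j * y2 ^ (d - j)) -
        x2 ^ i * y2 ^ (d - i) * (x1 ^ j * y1 ^ (d - j))) := by
  rcases le_total i j with h | h
  · exact cross_dvd_le d i j hj h x1 y1 x2 y2
  · rw [show x1 ^ i * y1 ^ (d - i) * (x2 ^ j * y2 ^ (d - j)) -
        x2 ^ i * y2 ^ (d - i) * (x1 ^ j * y1 ^ (d - j)) =
        -(x1 ^ j * y1 ^ (d - j) * (x2 ^ i * y2 ^ (d - i)) -
          x2 ^ j * y2 ^ (d - j) * (x1 ^ i * y1 ^ (d - i))) from by ring]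
    exact dvd_neg.mpr (cross_dvd_le d j i hi h x1 y1 x2 y2)

lemma cross_dvd {R : Type*} [CommRing R] (d : ℕ) (a b : Fin (d + 1) → R)
    (x1 y1 x2 y2 : R) :
    (x1 * y2 - x2 * y1) ∣
      ((∑ i : Fin (d + 1), a i * x1 ^ (i : ℕ) * y1 ^ (d - (i : ℕ))) *
          (∑ i : Fin (d + 1), b i * x2 ^ (i : ℕ) * y2 ^ (d - (i : ℕ))) -
        (∑ i : Fin (d + 1), a i * x2 ^ (i : ℕ) * y2 ^ (d - (i : ℕ))) *
          (∑ i : Fin (d + 1), b i * x1 ^ (i : ℕ) * y1 ^ (d - (i : ℕ)))) := by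
  rw [Finset.sum_mul_sum, Finset.sum_mul_sum, ← Finset.sum_sub_distrib]
  refine Finset.dvd_sum fun i _ => ?_
  rw [← Finset.sum_sub_distrib]
  refine Finset.dvd_sum fun j _ => ?_
  rw [show a i * x1 ^ (i : ℕ) * y1 ^ (d - (i : ℕ)) * (b j * x2 ^ (j : ℕ) * y2 ^ (d - (j : ℕ))) -
      a i * x2 ^ (i : ℕ) * y2 ^ (d - (i : ℕ)) * (b j * x1 ^ (j : ℕ) * y1 ^ (d - (j : ℕ))) =
      (a i * b j) *
        (x1 ^ (i : ℕ) * y1 ^ (d - (i : ℕ)) * (x2 ^ (j : ℕ) * y2 ^ (d - (j : ℕ))) -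
          x2 ^ (i : ℕ) * y2 ^ (d - (i : ℕ)) * (x1 ^ (j : ℕ) * y1 ^ (d - (j : ℕ)))) from by ring]
  exact Dvd.dvd.mul_left
    (cross_dvd_aux d (i : ℕ) (j : ℕ) (Nat.lt_succ_iff.mp i.isLt) (Nat.lt_succ_iff.mp j.isLt)
      x1 y1 x2 y2) _

/-- The key divisibility with an integral witness. -/
lemma cross_dvd_integral (d : ℕ) (a b : Fin (d + 1) → K)
    (ha : ∀ i, 0 ≤ pl.v (a i)) (hb : ∀ i, 0 ≤ pl.v (b i))
    {x1 y1 x2 y2 : K} (hx1 : 0 ≤ pl.v x1) (hy1 : 0 ≤ pl.v y1)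
    (hx2 : 0 ≤ pl.v x2) (hy2 : 0 ≤ pl.v y2) :
    ∃ h : K, 0 ≤ pl.v h ∧
      formEval d a x1 y1 * formEval d b x2 y2 - formEval d a x2 y2 * formEval d b x1 y1 =
        (x1 * y2 - x2 * y1) * h := by
  obtain ⟨h, hh⟩ := cross_dvd (R := integersAt pl) d
    (fun i => ⟨a i, ha i⟩) (fun i => ⟨b i, hb i⟩) ⟨x1, hx1⟩ ⟨y1, hy1⟩ ⟨x2, hx2⟩ ⟨y2, hy2⟩
  refine ⟨(h : K), h.2, ?_⟩
  have h2 := congrArg (Subtype.val : integersAt pl → K) hh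
  push_cast at h2
  simpa [formEval] using h2

lemma sum_shift {M : Type*} [AddCommMonoid M] (f : ℕ → M) (i n : ℕ) :
    ∑ j ∈ Finset.Icc i (i + n), f j = ∑ k ∈ Finset.range (n + 1), f (i + k) := by
  induction n with
  | zero => simp
  | succ n ih =>
      rw [show i + (n + 1) = (i + n) + 1 from rfl,
        Finset.sum_Icc_succ_top (by omega) f, ih]
      conv_rhs => rw [Finset.sum_range_succ]
      rw [show i + (n + 1) = i + n + 1 from rfl]

open Classical in
noncomputable def extCoef (d : ℕ) (a : Fin (d + 1) → K) : ℕ → K :=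
  fun k => if h : k < d + 1 then a ⟨k, h⟩ else 0

lemma formEval_eq_range (d : ℕ) (a : Fin (d + 1) → K) (x y : K) :
    formEval d a x y = ∑ k ∈ Finset.range (d + 1), extCoef d a k * x ^ k * y ^ (d - k) := by
  rw [formEval, ← Fin.sum_univ_eq_sum_range (fun k => extCoef d a k * x ^ k * y ^ (d - k))]
  refine Finset.sum_congr rfl fun k _ => ?_
  rw [extCoef, dif_pos k.isLt]

open Classical in
lemma sylvester_mulVec (d : ℕ) (a b : Fin (d + 1) → K) (x y : K) :
    (sylvester d a b).mulVec (fun j : Fin (d + d) => x ^ (j : ℕ) * y ^ (d + d - 1 - (j : ℕ)))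
      = fun i : Fin (d + d) =>
        if (i : ℕ) < d then x ^ (i : ℕ) * y ^ (d - 1 - (i : ℕ)) * formEval d a x y
        else x ^ ((i : ℕ) - d) * y ^ (d + d - 1 - (i : ℕ)) * formEval d b x y := by
  funext i
  have hi2 : (i : ℕ) < d + d := i.isLt
  rw [Matrix.mulVec, dotProduct]
  by_cases hi : (i : ℕ) < d
  · rw [if_pos hi]
    set g : ℕ → K := fun j =>
      (if (i : ℕ) ≤ j ∧ j ≤ (i : ℕ) + d then extCoef d a (j - (i : ℕ)) else 0)
        * (x ^ j * y ^ (d + d - 1 - j)) with hg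
    have hstep : ∀ j : Fin (d + d),
        sylvester d a b i j * (x ^ (j : ℕ) * y ^ (d + d - 1 - (j : ℕ))) = g (j : ℕ) := by
      intro j
      rw [hg]
      congr 1
      simp only [sylvester, Matrix.of_apply, dif_pos hi]
      split_ifs with h
      · rw [extCoef, dif_pos (by omega : (j : ℕ) - (i : ℕ) < d + 1)]
      · rfl
    rw [Finset.sum_congr rfl (fun j _ => hstep j), Fin.sum_univ_eq_sum_range]
    have hsub : Finset.Icc (i : ℕ) ((i : ℕ) + d) ⊆ Finset.range (d + d) := by
      intro j hj
      rw [Finset.mem_Icc] at hj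
      rw [Finset.mem_range]
      omega
    have hvan : ∀ j ∈ Finset.range (d + d), j ∉ Finset.Icc (i : ℕ) ((i : ℕ) + d) → g j = 0 := by
      intro j _ hj
      rw [Finset.mem_Icc] at hj
      rw [hg]
      simp only []
      rw [if_neg (by omega), zero_mul]
    rw [← Finset.sum_subset hsub hvan, sum_shift, formEval_eq_range, Finset.mul_sum]
    refine Finset.sum_congr rfl fun k hk => ?_
    rw [Finset.mem_range] at hk
    rw [hg]
    simp only []
    rw [if_pos ⟨by omega, by omega⟩, Nat.add_sub_cancel_left,
      show d + d - 1 - ((i : ℕ) + k) = (d - 1 - (i : ℕ)) + (d - k) from by omega,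
      pow_add, pow_add]
    ring
  · rw [if_neg hi]
    have hd : d ≤ (i : ℕ) := Nat.le_of_not_lt hi
    set g : ℕ → K := fun j =>
      (if (i : ℕ) - d ≤ j ∧ j ≤ (i : ℕ) then extCoef d b (j - ((i : ℕ) - d)) else 0)
        * (x ^ j * y ^ (d + d - 1 - j)) with hg
    have hstep : ∀ j : Fin (d + d),
        sylvester d a b i j * (x ^ (j : ℕ) * y ^ (d + d - 1 - (j : ℕ))) = g (j : ℕ) := by
      intro j
      rw [hg]
      congr 1
      simp only [sylvester, Matrix.of_apply, dif_neg hi]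
      split_ifs with h
      · rw [extCoef, dif_pos (by omega : (j : ℕ) - ((i : ℕ) - d) < d + 1)]
      · rfl
    rw [Finset.sum_congr rfl (fun j _ => hstep j), Fin.sum_univ_eq_sum_range]
    have hsub : Finset.Icc ((i : ℕ) - d) (((i : ℕ) - d) + d) ⊆ Finset.range (d + d) := by
      intro j hj
      rw [Finset.mem_Icc] at hj
      rw [Finset.mem_range]
      omega
    have hvan : ∀ j ∈ Finset.range (d + d),
        j ∉ Finset.Icc ((i : ℕ) - d) (((i : ℕ) - d) + d) → g j = 0 := by
      intro j _ hj
      rw [Finset.mem_Icc] at hj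
      rw [hg]
      simp only []
      rw [if_neg (by omega), zero_mul]
    rw [← Finset.sum_subset hsub hvan, sum_shift, formEval_eq_range, Finset.mul_sum]
    refine Finset.sum_congr rfl fun k hk => ?_
    rw [Finset.mem_range] at hk
    rw [hg]
    simp only []
    rw [if_pos ⟨by omega, by omega⟩, Nat.add_sub_cancel_left,
      show d + d - 1 - (((i : ℕ) - d) + k) = (d + d - 1 - (i : ℕ)) + (d - k) from by omega,
      pow_add, pow_add]
    ring

lemma sylvester_entries_int (d : ℕ) (a b : Fin (d + 1) → K)
    (ha : ∀ i, 0 ≤ pl.v (a i)) (hb : ∀ i, 0 ≤ pl.v (b i)) :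
    ∀ i j, 0 ≤ pl.v (sylvester d a b i j) := by
  intro i j
  simp only [sylvester, Matrix.of_apply]
  split_ifs <;> first
    | exact ha _
    | exact hb _
    | exact le_of_eq pl.v_zero.symm

lemma adjugate_entries_int {n : ℕ} (A : Matrix (Fin n) (Fin n) K)
    (h : ∀ i j, 0 ≤ pl.v (A i j)) : ∀ i j, 0 ≤ pl.v (A.adjugate i j) := by
  intro i j
  rw [Matrix.adjugate_apply]
  refine v_det_nonneg pl _ fun k l => ?_
  rw [Matrix.updateRow_apply]
  split_ifs with hk
  · rcases eq_or_ne l i with rfl | hl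
    · rw [Pi.single_eq_same]
      exact le_of_eq pl.v_one.symm
    · rw [Pi.single_eq_of_ne hl]
      exact le_of_eq pl.v_zero.symm
  · exact h _ _

lemma res_identity (d : ℕ) (a b : Fin (d + 1) → K) (x y : K) (j : Fin (d + d)) :
    resultant d a b * (x ^ (j : ℕ) * y ^ (d + d - 1 - (j : ℕ))) =
      ∑ i : Fin (d + d), (sylvester d a b).adjugate j i *
        (if (i : ℕ) < d then x ^ (i : ℕ) * y ^ (d - 1 - (i : ℕ)) * formEval d a x y
         else x ^ ((i : ℕ) - d) * y ^ (d + d - 1 - (i : ℕ)) * formEval d b x y) := by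
  have h1 := congrArg
    (fun M : Matrix (Fin (d + d)) (Fin (d + d)) K =>
      M.mulVec (fun j : Fin (d + d) => x ^ (j : ℕ) * y ^ (d + d - 1 - (j : ℕ))))
    (Matrix.adjugate_mul (sylvester d a b))
  rw [← Matrix.mulVec_mulVec, sylvester_mulVec, Matrix.smul_mulVec,
    Matrix.one_mulVec] at h1
  have h2 := congrFun h1 j
  simp only [Matrix.mulVec, dotProduct, Pi.smul_apply, smul_eq_mul] at h2
  rw [resultant]
  exact h2.symm

lemma lemA (d : ℕ) (hd : 1 ≤ d) (a b : Fin (d + 1) → K)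
    (ha : ∀ i, 0 ≤ pl.v (a i)) (hb : ∀ i, 0 ≤ pl.v (b i))
    (hres : pl.v (resultant d a b) = 0) (hres0 : resultant d a b ≠ 0)
    (x y : K) (hxy : ¬(x = 0 ∧ y = 0)) (hmin : vminVec pl ![x, y] = 0)
    (hFG : ¬(formEval d a x y = 0 ∧ formEval d b x y = 0)) :
    vminVec pl ![formEval d a x y, formEval d b x y] = 0 := by
  have hx : 0 ≤ pl.v x := coord_nonneg_left pl hmin
  have hy : 0 ≤ pl.v y := coord_nonneg_right pl hmin
  have hFint : 0 ≤ pl.v (formEval d a x y) := by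
    rw [formEval]
    exact pl.v_sum_nonneg _ _ fun i _ =>
      pl.v_mul_nonneg (pl.v_mul_nonneg (ha i) (pl.v_pow_nonneg hx _)) (pl.v_pow_nonneg hy _)
  have hGint : 0 ≤ pl.v (formEval d b x y) := by
    rw [formEval]
    exact pl.v_sum_nonneg _ _ fun i _ =>
      pl.v_mul_nonneg (pl.v_mul_nonneg (hb i) (pl.v_pow_nonneg hx _)) (pl.v_pow_nonneg hy _)
  have hadj := adjugate_entries_int pl (sylvester d a b) (sylvester_entries_int pl d a b ha hb)
  have hnot : ¬((formEval d a x y = 0 ∨ 0 < pl.v (formEval d a x y)) ∧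
      (formEval d b x y = 0 ∨ 0 < pl.v (formEval d b x y))) := by
    rintro ⟨hF, hG⟩
    have hM : ∀ j : Fin (d + d),
        resultant d a b * (x ^ (j : ℕ) * y ^ (d + d - 1 - (j : ℕ))) = 0 ∨
          0 < pl.v (resultant d a b * (x ^ (j : ℕ) * y ^ (d + d - 1 - (j : ℕ)))) := by
      intro j
      rw [res_identity d a b x y j]
      refine pl.hred_sum _ _ fun i _ => ?_
      by_cases hi : (i : ℕ) < d
      · rw [if_pos hi, show (sylvester d a b).adjugate j i *
          (x ^ (i : ℕ) * y ^ (d - 1 - (i : ℕ)) * formEval d a x y) =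
          ((sylvester d a b).adjugate j i * (x ^ (i : ℕ) * y ^ (d - 1 - (i : ℕ)))) *
            formEval d a x y from by ring]
        exact pl.hred_mul (pl.v_mul_nonneg (hadj j i)
          (pl.v_mul_nonneg (pl.v_pow_nonneg hx _) (pl.v_pow_nonneg hy _))) hF
      · rw [if_neg hi, show (sylvester d a b).adjugate j i *
          (x ^ ((i : ℕ) - d) * y ^ (d + d - 1 - (i : ℕ)) * formEval d b x y) =
          ((sylvester d a b).adjugate j i * (x ^ ((i : ℕ) - d) * y ^ (d + d - 1 - (i : ℕ)))) *
            formEval d b x y from by ring]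
        exact pl.hred_mul (pl.v_mul_nonneg (hadj j i)
          (pl.v_mul_nonneg (pl.v_pow_nonneg hx _) (pl.v_pow_nonneg hy _))) hG
    have hxbad : x = 0 ∨ 0 < pl.v x := by
      have h1 := hM ⟨d + d - 1, by omega⟩
      have he : d + d - 1 - (d + d - 1) = 0 := by omega
      rw [he, pow_zero, mul_one] at h1
      rcases h1 with h1 | h1
      · rcases mul_eq_zero.1 h1 with h' | h'
        · exact absurd h' hres0
        · exact Or.inl (pow_eq_zero_iff (by omega : d + d - 1 ≠ 0) |>.mp h')
      · by_cases hx0 : x = 0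
        · exact Or.inl hx0
        · right
          rw [pl.v_mul _ _ hres0 (pow_ne_zero _ hx0), hres, zero_add,
            pl.v_pow_eq hx0] at h1
          by_contra hc
          push_neg at hc
          have hn : (0 : ℤ) < ((d + d - 1 : ℕ) : ℤ) := by
            have : 1 ≤ d + d - 1 := by omega
            exact_mod_cast Nat.lt_of_lt_of_le Nat.zero_lt_one this
          nlinarith
    have hybad : y = 0 ∨ 0 < pl.v y := by
      have h1 := hM ⟨0, by omega⟩
      rw [pow_zero, one_mul, Nat.sub_zero] at h1
      rcases h1 with h1 | h1
      · rcases mul_eq_zero.1 h1 with h' | h'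
        · exact absurd h' hres0
        · exact Or.inl (pow_eq_zero_iff (by omega : d + d - 1 ≠ 0) |>.mp h')
      · by_cases hy0 : y = 0
        · exact Or.inl hy0
        · right
          rw [pl.v_mul _ _ hres0 (pow_ne_zero _ hy0), hres, zero_add,
            pl.v_pow_eq hy0] at h1
          by_contra hc
          push_neg at hc
          have hn : (0 : ℤ) < ((d + d - 1 : ℕ) : ℤ) := by
            have : 1 ≤ d + d - 1 := by omega
            exact_mod_cast Nat.lt_of_lt_of_le Nat.zero_lt_one this
          nlinarith
    -- contradiction with hmin
    rw [vminVec_pair] at hmin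
    rcases hxbad with hx0 | hxpos
    · rcases hybad with hy0 | hypos
      · exact hxy ⟨hx0, hy0⟩
      · rw [if_pos hx0] at hmin
        omega
    · have hx0 : x ≠ 0 := fun h => by rw [h, pl.v_zero] at hxpos; omega
      rcases hybad with hy0 | hypos
      · rw [if_neg hx0, if_pos hy0] at hmin
        omega
      · have hy0 : y ≠ 0 := fun h => by rw [h, pl.v_zero] at hypos; omega
        rw [if_neg hx0, if_neg hy0] at hmin
        omega
  rcases not_and_or.1 hnot with hF | hG
  · push_neg at hF
    exact vminVec_eq_zero pl hFint hGint (Or.inl ⟨hF.1, by have := hF.2; omega⟩)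
  · push_neg at hG
    exact vminVec_eq_zero pl hFint hGint (Or.inr ⟨hG.1, by have := hG.2; omega⟩)

/-- Monotonicity of the logarithmic distance under a map with good reduction. -/
lemma logDist_le_apply (φ : P1 K → P1 K) (hg : GoodReduction pl φ) (P Q : P1 K) :
    logDist pl P Q ≤ logDist pl (φ P) (φ Q) := by
  obtain ⟨d, a, b, hlift, ha, hb, hres⟩ := hg
  have hres0 : resultant d a b ≠ 0 := hlift.1
  rcases Nat.eq_zero_or_pos d with hd | hd
  · -- degree 0 : the map is constant
    subst hd
    obtain ⟨h1', e1⟩ := hlift.2 (P.rep 0) (P.rep 1) (P1.rep_ne P)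
    obtain ⟨h2', e2⟩ := hlift.2 (Q.rep 0) (Q.rep 1) (P1.rep_ne Q)
    have hca : ∀ x y : K, formEval 0 a x y = a 0 := by
      intro x y
      simp [formEval]
    have hcb : ∀ x y : K, formEval 0 b x y = b 0 := by
      intro x y
      simp [formEval]
    have hPQ : φ P = φ Q := by
      conv_lhs => rw [← P1.mk_rep P (P1.rep_ne P)]
      conv_rhs => rw [← P1.mk_rep Q (P1.rep_ne Q)]
      rw [e1, e2]
      apply mk_eq_of_cross
      rw [hca, hca, hcb, hcb]
      ring
    have htop : logDist pl (φ Q) (φ Q) = ⊤ :=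
      logDist_top_of_cross_zero pl _ _ (by ring)
    rw [hPQ, htop]
    exact le_top
  · -- positive degree
    obtain ⟨c1, hc10, hc1v⟩ := pl.v_surj (-(vminVec pl ![P.rep 0, P.rep 1]))
    obtain ⟨c2, hc20, hc2v⟩ := pl.v_surj (-(vminVec pl ![Q.rep 0, Q.rep 1]))
    have h1 : ¬(c1 * P.rep 0 = 0 ∧ c1 * P.rep 1 = 0) := by
      rintro ⟨hx, hy⟩
      exact P1.rep_ne P ⟨by rcases mul_eq_zero.1 hx with h | h; exacts [absurd h hc10, h],
        by rcases mul_eq_zero.1 hy with h | h; exacts [absurd h hc10, h]⟩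
    have h2 : ¬(c2 * Q.rep 0 = 0 ∧ c2 * Q.rep 1 = 0) := by
      rintro ⟨hx, hy⟩
      exact P1.rep_ne Q ⟨by rcases mul_eq_zero.1 hx with h | h; exacts [absurd h hc20, h],
        by rcases mul_eq_zero.1 hy with h | h; exacts [absurd h hc20, h]⟩
    have hP : P = P1.mk (c1 * P.rep 0) (c1 * P.rep 1) h1 :=
      ((P1.mk_smul c1 hc10 _ _ (P1.rep_ne P) h1).trans (P1.mk_rep P _)).symm
    have hQ : Q = P1.mk (c2 * Q.rep 0) (c2 * Q.rep 1) h2 :=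
      ((P1.mk_smul c2 hc20 _ _ (P1.rep_ne Q) h2).trans (P1.mk_rep Q _)).symm
    have hm1 : vminVec pl ![c1 * P.rep 0, c1 * P.rep 1] = 0 := by
      rw [vminVec_smul pl c1 hc10 _ _ (P1.rep_ne P), hc1v]
      omega
    have hm2 : vminVec pl ![c2 * Q.rep 0, c2 * Q.rep 1] = 0 := by
      rw [vminVec_smul pl c2 hc20 _ _ (P1.rep_ne Q), hc2v]
      omega
    have hx1 : 0 ≤ pl.v (c1 * P.rep 0) := coord_nonneg_left pl hm1
    have hy1 : 0 ≤ pl.v (c1 * P.rep 1) := coord_nonneg_right pl hm1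
    have hx2 : 0 ≤ pl.v (c2 * Q.rep 0) := coord_nonneg_left pl hm2
    have hy2 : 0 ≤ pl.v (c2 * Q.rep 1) := coord_nonneg_right pl hm2
    obtain ⟨hFG1, e1⟩ := hlift.2 (c1 * P.rep 0) (c1 * P.rep 1) h1
    obtain ⟨hFG2, e2⟩ := hlift.2 (c2 * Q.rep 0) (c2 * Q.rep 1) h2
    rw [hP, hQ, e1, e2, logDist_mk_mk, logDist_mk_mk, hm1, hm2,
      lemA pl d hd a b ha hb hres hres0 _ _ h1 hm1 hFG1,
      lemA pl d hd a b ha hb hres hres0 _ _ h2 hm2 hFG2]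
    refine add_le_add ?_ le_rfl
    obtain ⟨h, hint, heq⟩ := cross_dvd_integral pl d a b ha hb hx1 hy1 hx2 hy2
    by_cases hdiff : formEval d a (c1 * P.rep 0) (c1 * P.rep 1) *
        formEval d b (c2 * Q.rep 0) (c2 * Q.rep 1) -
        formEval d a (c2 * Q.rep 0) (c2 * Q.rep 1) *
        formEval d b (c1 * P.rep 0) (c1 * P.rep 1) = 0
    · rw [hdiff, extv_zero]
      exact le_top
    · have hcross : c1 * P.rep 0 * (c2 * Q.rep 1) - c2 * Q.rep 0 * (c1 * P.rep 1) ≠ 0 := by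
        intro h0
        exact hdiff (by rw [heq, h0, zero_mul])
      have hh0 : h ≠ 0 := fun h0 => hdiff (by rw [heq, h0, mul_zero])
      rw [extv_eq_coe pl hcross, extv_eq_coe pl hdiff, heq,
        pl.v_mul _ _ hcross hh0, WithTop.coe_le_coe]
      omega

lemma logDist_le_iterate (φ : P1 K → P1 K) (hg : GoodReduction pl φ) (P Q : P1 K) (n : ℕ) :
    logDist pl P Q ≤ logDist pl (φ^[n] P) (φ^[n] Q) := by
  induction n with
  | zero => exact le_rfl
  | succ n ih =>
      rw [Function.iterate_succ_apply', Function.iterate_succ_apply']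
      exact le_trans ih (logDist_le_apply pl φ hg _ _)
end Aux
/-- Lemma 4.1.  Let `K` be a global field, `S` a finite set of places of
`K`, and `φ` an endomorphism of `ℙ¹` defined over `K` with good reduction outside `S`.
Suppose `P = P_(-m+1) ↦ P_(-m+2) ↦ … ↦ P_(-1) ↦ P_0 = [0:1] ↦ [0:1]` is an orbit for `φ`
(so `P_(-a) = φ^(m-1-a)(P)` and `P_0 = [0:1]` is a fixed point).  Then for all integers
`0 < a < b ≤ m-1` and every place `𝔭 ∉ S`,
`δ_𝔭(P_(-b), P_(-a)) = δ_𝔭(P_(-b), P_0) ≤ δ_𝔭(P_(-a), P_0)`. -/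
theorem stmt12 (K : Type) [Field K] (hK : IsGlobalField K)
    (S : Finset (Place K)) (φ : P1 K → P1 K) (hφ : IsEndo φ)
    (hgood : ∀ pl : Place K, pl ∉ S → GoodReduction pl φ)
    (m : ℕ) (hm : 1 ≤ m) (P : P1 K)
    (horb : φ^[m - 1] P = P1zero) (hfix : φ P1zero = (P1zero : P1 K))
    (a b : ℕ) (ha : 0 < a) (hab : a < b) (hb : b ≤ m - 1)
    (pl : Place K) (hpl : pl ∉ S) :
    logDist pl (φ^[m - 1 - b] P) (φ^[m - 1 - a] P) =
        logDist pl (φ^[m - 1 - b] P) P1zero ∧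
      logDist pl (φ^[m - 1 - b] P) P1zero ≤ logDist pl (φ^[m - 1 - a] P) P1zero := by
  have hg := hgood pl hpl
  have hzero_iter : ∀ j : ℕ, φ^[j] P1zero = (P1zero : P1 K) := by
    intro j
    induction j with
    | zero => rfl
    | succ j ih => rw [Function.iterate_succ_apply', ih, hfix]
  have hF1 : ∀ j k : ℕ, j ≤ k → k ≤ m - 1 →
      φ^[j] (φ^[m - 1 - k] P) = φ^[m - 1 - (k - j)] P := by
    intro j k hjk hk
    rw [← Function.iterate_add_apply]
    congr 1
    omega
  have hchain : ∀ a' b' : ℕ, a' ≤ b' → b' ≤ m - 1 →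
      logDist pl (φ^[m - 1 - b'] P) P1zero ≤ logDist pl (φ^[m - 1 - a'] P) P1zero := by
    intro a' b' hab' hb'
    have h := logDist_le_iterate pl φ hg (φ^[m - 1 - b'] P) P1zero (b' - a')
    rw [hzero_iter, hF1 (b' - a') b' (by omega) hb',
      show b' - (b' - a') = a' from by omega] at h
    exact h
  have main : ∀ b' a' : ℕ, 0 < a' → a' < b' → b' ≤ m - 1 →
      logDist pl (φ^[m - 1 - b'] P) (φ^[m - 1 - a'] P) =
        logDist pl (φ^[m - 1 - b'] P) P1zero := by
    intro b'
    induction b' using Nat.strong_induction_on with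
    | _ b' IH =>
      intro a' ha' hab' hb'
      have hxy : logDist pl (φ^[m - 1 - b'] P) P1zero ≤
          logDist pl (φ^[m - 1 - a'] P) P1zero := hchain a' b' (le_of_lt hab') hb'
      have hlow : logDist pl (φ^[m - 1 - b'] P) P1zero ≤
          logDist pl (φ^[m - 1 - b'] P) (φ^[m - 1 - a'] P) := by
        have h := logDist_ultra pl (φ^[m - 1 - b'] P) P1zero (φ^[m - 1 - a'] P)
        rw [logDist_comm pl P1zero (φ^[m - 1 - a'] P)] at h
        exact le_trans (le_min le_rfl hxy) h
      have hupp : logDist pl (φ^[m - 1 - b'] P) (φ^[m - 1 - a'] P) ≤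
          logDist pl (φ^[m - 1 - b'] P) P1zero := by
        rcases lt_or_eq_of_le hxy with hlt | heq
        · have h := logDist_ultra pl (φ^[m - 1 - b'] P) (φ^[m - 1 - a'] P) P1zero
          rcases le_total (logDist pl (φ^[m - 1 - b'] P) (φ^[m - 1 - a'] P))
              (logDist pl (φ^[m - 1 - a'] P) P1zero) with hc | hc
          · rw [min_eq_left hc] at h
            exact h
          · rw [min_eq_right hc] at h
            exact absurd h (not_le.mpr hlt)
        · have hstep : logDist pl (φ^[m - 1 - b'] P) (φ^[m - 1 - a'] P) ≤
              logDist pl (φ^[m - 1 - (b' - 1)] P) (φ^[m - 1 - (a' - 1)] P) := by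
            have h := logDist_le_apply pl φ hg (φ^[m - 1 - b'] P) (φ^[m - 1 - a'] P)
            have e1 := hF1 1 b' (by omega) hb'
            have e2 := hF1 1 a' (by omega) (by omega)
            rw [Function.iterate_one] at e1 e2
            rw [e1, e2] at h
            exact h
          by_cases ha1 : a' = 1
          · subst ha1
            rw [show m - 1 - (1 - 1) = m - 1 from by omega, horb] at hstep
            have hD : logDist pl (φ^[m - 1 - (b' - 1)] P) P1zero ≤
                logDist pl (φ^[m - 1 - 1] P) P1zero := hchain 1 (b' - 1) (by omega) (by omega)
            exact le_trans hstep (le_trans hD (le_of_eq heq.symm))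
          · have hIH := IH (b' - 1) (by omega) (a' - 1) (by omega) (by omega) (by omega)
            have hD : logDist pl (φ^[m - 1 - (b' - 1)] P) P1zero ≤
                logDist pl (φ^[m - 1 - a'] P) P1zero := hchain a' (b' - 1) (by omega) (by omega)
            exact le_trans hstep (le_trans (le_of_eq hIH) (le_trans hD (le_of_eq heq.symm)))
      exact le_antisymm hupp hlow
  exact ⟨main b a ha hab hb, hchain a b (le_of_lt hab) hb⟩
end ArxivPreper
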